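/- Let Ω ⊆ R^n be bounded open, ω : Ω → (0,∞) with ω^p ∈ L^1(Ω), 1 < p,q < ∞ conjugate. For g ∈ L^q(Ω, ω^{-q}) with ∫_Ω g = 0 and α ∈ R, one has ‖g‖_{L^q(Ω,ω^{-q})} ≤ 2 ‖g + α ω^p‖_{L^q(Ω,ω^{-q})}. -/

import Mathlib

open MeasureTheory Metric Set ENNReal

/-- Quantitative part of Lemma 3.1 of the paper: for mean-zero `g ∈ L^q(Ω, ω^{-q})`
and any constant `α`, one has `‖g‖_{L^q(Ω,ω^{-q})} ≤ 2 ‖g + α ω^p‖_{L^q(Ω,ω^{-q})}`. -/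
theorem mean_zero_projection_bound
    (n : ℕ) (hn : 1 ≤ n) (Ω : Set (EuclideanSpace ℝ (Fin n)))
    (hΩopen : IsOpen Ω) (hΩbdd : Bornology.IsBounded Ω)
    (p q : ℝ) (hp : 1 < p) (hq : 1 < q) (hpq : 1 / p + 1 / q = 1)
    (ω : EuclideanSpace ℝ (Fin n) → ℝ) (hωmeas : Measurable ω)
    (hωpos : ∀ x ∈ Ω, 0 < ω x)
    (hωLp : IntegrableOn (fun x => ω x ^ p) Ω volume)
    (g : EuclideanSpace ℝ (Fin n) → ℝ) (hg : Measurable g)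
    (hgint : IntegrableOn g Ω volume) (hgmean : (∫ x in Ω, g x) = 0)
    (hgLq : ∫⁻ x in Ω, ENNReal.ofReal (|g x| ^ q * ω x ^ (-q)) ≠ ⊤)
    (α : ℝ) :
    (∫⁻ x in Ω, ENNReal.ofReal (|g x| ^ q * ω x ^ (-q))) ^ (1 / q) ≤
      2 * (∫⁻ x in Ω,
        ENNReal.ofReal (|g x + α * ω x ^ p| ^ q * ω x ^ (-q))) ^ (1 / q) := by
  have hΩm : MeasurableSet Ω := hΩopen.measurableSet
  set μ := volume.restrict Ω with hμdef
  have hp0 : (0:ℝ) < p := lt_trans one_pos hp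
  have hq0 : (0:ℝ) < q := lt_trans one_pos hq
  have hqne : q ≠ 0 := ne_of_gt hq0
  have hpne : p ≠ 0 := ne_of_gt hp0
  have hsum : q + p = p * q := by
    field_simp at hpq
    linarith
  have hpqe : (p - 1) * q = p := by nlinarith [hsum]
  have hconj : Real.HolderConjugate q p :=
    ⟨by rw [inv_one, inv_eq_one_div, inv_eq_one_div]; linarith, hq0, hp0⟩
  have hmem : ∀ᵐ x ∂μ, x ∈ Ω := ae_restrict_mem hΩm
  set A : EuclideanSpace ℝ (Fin n) → ℝ≥0∞ :=
    fun x => ENNReal.ofReal (|g x + α * ω x ^ p| / ω x) with hAdef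
  set B : EuclideanSpace ℝ (Fin n) → ℝ≥0∞ :=
    fun x => ENNReal.ofReal (|α| * ω x ^ (p - 1)) with hBdef
  set G : EuclideanSpace ℝ (Fin n) → ℝ≥0∞ :=
    fun x => ENNReal.ofReal (|g x| / ω x) with hGdef
  set W : EuclideanSpace ℝ (Fin n) → ℝ≥0∞ :=
    fun x => ENNReal.ofReal (ω x) with hWdef
  have hAm : Measurable A := by fun_prop
  have hBm : Measurable B := by fun_prop
  have hGm : Measurable G := by fun_prop
  have hWm : Measurable W := by fun_prop
  -- pointwise identities
  have key : ∀ (f : EuclideanSpace ℝ (Fin n) → ℝ) (x : EuclideanSpace ℝ (Fin n)),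
      0 < ω x → ENNReal.ofReal (|f x| ^ q * ω x ^ (-q)) =
        ENNReal.ofReal (|f x| / ω x) ^ q := by
    intro f x hω
    rw [ENNReal.ofReal_rpow_of_nonneg (by positivity) hq0.le]
    congr 1
    rw [div_eq_mul_inv, Real.mul_rpow (abs_nonneg _) (by positivity),
      Real.rpow_neg hω.le, ← Real.inv_rpow hω.le]
  have eqG : ∀ᵐ x ∂μ, ENNReal.ofReal (|g x| ^ q * ω x ^ (-q)) = G x ^ q := by
    filter_upwards [hmem] with x hx
    exact key g x (hωpos x hx)
  have eqA : ∀ᵐ x ∂μ,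
      ENNReal.ofReal (|g x + α * ω x ^ p| ^ q * ω x ^ (-q)) = A x ^ q := by
    filter_upwards [hmem] with x hx
    exact key (fun x => g x + α * ω x ^ p) x (hωpos x hx)
  have eqB : ∀ᵐ x ∂μ, B x ^ q =
      ENNReal.ofReal |α| ^ q * ENNReal.ofReal (ω x ^ p) := by
    filter_upwards [hmem] with x hx
    have hω := hωpos x hx
    rw [hBdef]
    simp only
    rw [ENNReal.ofReal_rpow_of_nonneg (by positivity) hq0.le,
      Real.mul_rpow (abs_nonneg _) (by positivity),
      ← Real.rpow_mul hω.le, hpqe,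
      ENNReal.ofReal_mul (by positivity),
      ← ENNReal.ofReal_rpow_of_nonneg (abs_nonneg _) hq0.le]
  have eqW : ∀ᵐ x ∂μ, W x ^ p = ENNReal.ofReal (ω x ^ p) := by
    filter_upwards [hmem] with x hx
    have hω := hωpos x hx
    rw [hWdef]
    simp only
    rw [ENNReal.ofReal_rpow_of_nonneg hω.le hp0.le]
  -- pointwise triangle inequality
  have hGAB : ∀ᵐ x ∂μ, G x ≤ A x + B x := by
    filter_upwards [hmem] with x hx
    have hω := hωpos x hx
    have hωp : (0:ℝ) < ω x ^ p := by positivity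
    have h1 : |g x| ≤ |g x + α * ω x ^ p| + |α| * ω x ^ p := by
      calc |g x| = |(g x + α * ω x ^ p) + (-(α * ω x ^ p))| := by ring_nf
        _ ≤ |g x + α * ω x ^ p| + |-(α * ω x ^ p)| := abs_add_le _ _
        _ = |g x + α * ω x ^ p| + |α| * ω x ^ p := by
            rw [abs_neg, abs_mul, abs_of_pos hωp]
    have h2 : |g x| / ω x ≤ |g x + α * ω x ^ p| / ω x + |α| * ω x ^ (p - 1) := by
      have hdiv : |g x| / ω x ≤ (|g x + α * ω x ^ p| + |α| * ω x ^ p) / ω x := by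
        gcongr
      rw [add_div] at hdiv
      have : |α| * ω x ^ p / ω x = |α| * ω x ^ (p - 1) := by
        rw [mul_div_assoc, Real.rpow_sub hω, Real.rpow_one]
      linarith [hdiv, this.le, this.ge]
    calc G x ≤ ENNReal.ofReal (|g x + α * ω x ^ p| / ω x + |α| * ω x ^ (p - 1)) :=
          ENNReal.ofReal_le_ofReal h2
      _ ≤ A x + B x := ENNReal.ofReal_add_le
  -- the weight integral
  set I : ℝ≥0∞ := ∫⁻ x, ENNReal.ofReal (ω x ^ p) ∂μ with hIdef
  have hωae : 0 ≤ᶠ[ae μ] fun x => ω x ^ p := by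
    filter_upwards [hmem] with x hx
    have := hωpos x hx
    positivity
  have hIeq : ENNReal.ofReal (∫ x, ω x ^ p ∂μ) = I :=
    ofReal_integral_eq_lintegral_ofReal hωLp hωae
  have hItop : I ≠ ⊤ := by rw [← hIeq]; exact ENNReal.ofReal_ne_top
  by_cases hI0 : I = 0
  · -- then μ = 0 and the LHS vanishes
    have hmeas : Measurable fun x => ENNReal.ofReal (ω x ^ p) := by fun_prop
    have h0 : ∀ᵐ x ∂μ, ENNReal.ofReal (ω x ^ p) = 0 :=
      (lintegral_eq_zero_iff' hmeas.aemeasurable).mp hI0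
    have hfalse : ∀ᵐ _x ∂μ, False := by
      filter_upwards [hmem, h0] with x hx h0x
      have hω := hωpos x hx
      have : (0:ℝ) < ω x ^ p := by positivity
      rw [ENNReal.ofReal_eq_zero] at h0x
      linarith
    have hμ0 : μ = 0 := ae_eq_bot.mp (Filter.eventually_false_iff_eq_bot.mp hfalse)
    rw [hμ0, lintegral_zero_measure, ENNReal.zero_rpow_of_pos (by positivity)]
    exact zero_le
  -- main case
  set NA : ℝ≥0∞ := (∫⁻ x, A x ^ q ∂μ) ^ (1/q) with hNAdef
  set NB : ℝ≥0∞ := (∫⁻ x, B x ^ q ∂μ) ^ (1/q) with hNBdef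
  -- Hölder step
  have hAW : ∀ᵐ x ∂μ, A x * W x = ENNReal.ofReal |g x + α * ω x ^ p| := by
    filter_upwards [hmem] with x hx
    have hω := hωpos x hx
    rw [hAdef, hWdef]
    simp only
    rw [← ENNReal.ofReal_mul (by positivity), div_mul_cancel₀ _ (ne_of_gt hω)]
  have hintω : Integrable (fun x => α * ω x ^ p) μ := hωLp.const_mul α
  have hinth : Integrable (fun x => g x + α * ω x ^ p) μ := hgint.add hintω
  have habs : Integrable (fun x => |g x + α * ω x ^ p|) μ := hinth.abs
  have hintegral : (∫ x, (g x + α * ω x ^ p) ∂μ) = α * ∫ x, ω x ^ p ∂μ := by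
    rw [integral_add hgint hintω, integral_const_mul]
    rw [hμdef] at *
    rw [hgmean, zero_add]
  have hIone : (0:ℝ) ≤ ∫ x, ω x ^ p ∂μ := integral_nonneg_of_ae hωae
  have h1 : |α| * ∫ x, ω x ^ p ∂μ ≤ ∫ x, |g x + α * ω x ^ p| ∂μ := by
    calc |α| * ∫ x, ω x ^ p ∂μ = |α * ∫ x, ω x ^ p ∂μ| := by
          rw [abs_mul, abs_of_nonneg hIone]
      _ = |∫ x, (g x + α * ω x ^ p) ∂μ| := by rw [hintegral]
      _ ≤ ∫ x, |g x + α * ω x ^ p| ∂μ := by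
          simpa [Real.norm_eq_abs] using
            norm_integral_le_integral_norm (μ := μ) (fun x => g x + α * ω x ^ p)
  have h2 : ENNReal.ofReal |α| * I ≤ NA * I ^ (1/p) := by
    calc ENNReal.ofReal |α| * I
        = ENNReal.ofReal (|α| * ∫ x, ω x ^ p ∂μ) := by
          rw [← hIeq, ← ENNReal.ofReal_mul (abs_nonneg _)]
      _ ≤ ENNReal.ofReal (∫ x, |g x + α * ω x ^ p| ∂μ) :=
          ENNReal.ofReal_le_ofReal h1
      _ = ∫⁻ x, ENNReal.ofReal |g x + α * ω x ^ p| ∂μ :=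
          ofReal_integral_eq_lintegral_ofReal habs
            (Filter.Eventually.of_forall fun x => abs_nonneg _)
      _ = ∫⁻ x, (A * W) x ∂μ := by
          refine lintegral_congr_ae ?_
          filter_upwards [hAW] with x hx
          exact hx.symm
      _ ≤ (∫⁻ x, A x ^ q ∂μ) ^ (1/q) * (∫⁻ x, W x ^ p ∂μ) ^ (1/p) :=
          ENNReal.lintegral_mul_le_Lp_mul_Lq μ hconj hAm.aemeasurable hWm.aemeasurable
      _ = NA * I ^ (1/p) := by rw [lintegral_congr_ae eqW]
  -- compute NB
  have hNB : NB = ENNReal.ofReal |α| * I ^ (1/q) := by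
    rw [hNBdef, lintegral_congr_ae eqB,
      lintegral_const_mul' _ _ (by
        exact ENNReal.rpow_ne_top_of_nonneg hq0.le ENNReal.ofReal_ne_top),
      ENNReal.mul_rpow_of_nonneg _ _ (by positivity),
      ← ENNReal.rpow_mul, mul_one_div_cancel hqne, ENNReal.rpow_one]
  have hIp0 : I ^ (1/p) ≠ 0 := by
    simp only [ne_eq, ENNReal.rpow_eq_zero_iff, not_or]
    constructor
    · rintro ⟨h, -⟩; exact hI0 h
    · rintro ⟨h, -⟩; exact hItop h
  have hIptop : I ^ (1/p) ≠ ⊤ :=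
    ENNReal.rpow_ne_top_of_nonneg (by positivity) hItop
  have hNBNA : NB ≤ NA := by
    rw [hNB]
    refine (ENNReal.mul_le_mul_iff_left hIp0 hIptop).mp ?_
    calc ENNReal.ofReal |α| * I ^ (1/q) * I ^ (1/p)
        = ENNReal.ofReal |α| * I := by
          rw [mul_assoc, ← ENNReal.rpow_add _ _ hI0 hItop,
            show 1/q + 1/p = 1 by linarith, ENNReal.rpow_one]
      _ ≤ NA * I ^ (1/p) := h2
  -- Minkowski step
  have hmink : (∫⁻ x, G x ^ q ∂μ) ^ (1/q) ≤ NA + NB := by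
    calc (∫⁻ x, G x ^ q ∂μ) ^ (1/q)
        ≤ (∫⁻ x, (A + B) x ^ q ∂μ) ^ (1/q) := by
          refine ENNReal.rpow_le_rpow ?_ (by positivity)
          refine lintegral_mono_ae ?_
          filter_upwards [hGAB] with x hx
          exact ENNReal.rpow_le_rpow hx hq0.le
      _ ≤ NA + NB :=
          ENNReal.lintegral_Lp_add_le hAm.aemeasurable hBm.aemeasurable hq.le
  calc (∫⁻ x, ENNReal.ofReal (|g x| ^ q * ω x ^ (-q)) ∂μ) ^ (1/q)
      = (∫⁻ x, G x ^ q ∂μ) ^ (1/q) := by rw [lintegral_congr_ae eqG]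
    _ ≤ NA + NB := hmink
    _ ≤ NA + NA := add_le_add_right hNBNA _
    _ = 2 * NA := (two_mul NA).symm
    _ = 2 * (∫⁻ x, ENNReal.ofReal (|g x + α * ω x ^ p| ^ q * ω x ^ (-q)) ∂μ) ^ (1/q) := by
        rw [lintegral_congr_ae eqA]
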